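/- Let n ∈ ℕ with n ≥ 3, let a ∈ ℝ with a ∉ {0, 1, …, n−2}, and set A = {0, 1, …, n−2, a} (a set with n elements). Then A is spectral if and only if a is rational and, writing a = p/q in reduced form (p ∈ ℤ, q ∈ ℕ, q ≥ 1, gcd(|p|, q) = 1), one has p + q ≡ 0 (mod n). -/

import Mathlib

open MeasureTheory Real

/-- The uniform atomic probability measure `μ_A = (1/|A|) ∑_{a ∈ A} δ_a` on a finite set
`A ⊂ ℝ`. -/
noncomputable def unifMeasure (A : Finset ℝ) : Measure ℝ :=
  (A.card : ENNReal)⁻¹ • ∑ a ∈ A, Measure.dirac a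

/-- A finite set `A ⊂ ℝ` is spectral if there is a set `Λ ⊆ ℝ` such that the exponentials
`{e_λ : λ ∈ Λ}`, `e_λ(x) = e^{2πiλx}`, form an orthonormal basis of `L²(μ_A)`. -/
def IsSpectralFinset (A : Finset ℝ) : Prop :=
  ∃ Λ : Set ℝ, ∃ b : HilbertBasis Λ ℂ (Lp ℂ 2 (unifMeasure A)),
    ∀ l : Λ, (b l : ℝ → ℂ) =ᵐ[unifMeasure A]
      fun x => Complex.exp (2 * π * Complex.I * (l : ℝ) * x)

section Aux

open Complex Finset Submodule

namespace SpectralAux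

variable (A : Finset ℝ)

lemma unif_apply (s : Set ℝ) :
    unifMeasure A s = (A.card : ENNReal)⁻¹ * ∑ x ∈ A, s.indicator 1 x := by
  simp [unifMeasure, Measure.smul_apply, Measure.finset_sum_apply, Measure.dirac_apply]

lemma ae_unif_iff {P : ℝ → Prop} :
    (∀ᵐ x ∂unifMeasure A, P x) ↔ ∀ x ∈ A, P x := by
  rw [ae_iff]
  rw [unif_apply]
  constructor
  · intro h x hx
    by_contra hPx
    rcases mul_eq_zero.1 h with h0 | h0
    · simp at h0
    · have := Finset.sum_eq_zero_iff.1 h0 x hx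
      simp [Set.indicator_apply, hPx] at this
  · intro h
    have : ∀ x ∈ A, ({y | ¬ P y}).indicator (1 : ℝ → ENNReal) x = 0 := by
      intro x hx
      simp [Set.indicator_apply, h x hx]
    rw [Finset.sum_congr rfl this]
    simp

instance : IsFiniteMeasure (unifMeasure A) := by
  constructor
  rw [unif_apply]
  rcases Nat.eq_zero_or_pos A.card with h | h
  · simp [Finset.card_eq_zero.1 h]
  · have : ∑ x ∈ A, (Set.univ : Set ℝ).indicator (1 : ℝ → ENNReal) x = A.card := by
      simp
    rw [this]
    refine ENNReal.mul_lt_top ?_ (by simp)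
    simp only [ENNReal.inv_lt_top]
    exact_mod_cast h

lemma integrable_sum_dirac (f : ℝ → ℂ) : Integrable f (∑ a ∈ A, Measure.dirac a) := by
  classical
  induction A using Finset.induction with
  | empty => simp
  | insert _ _ h ih =>
      rw [Finset.sum_insert h]
      exact Integrable.add_measure ((integrable_const _).congr (ae_eq_dirac f).symm) ih

lemma integrable_unif (f : ℝ → ℂ) : Integrable f (unifMeasure A) := by
  classical
  rcases eq_or_ne A ∅ with rfl | hA
  · simp [unifMeasure]
  rw [unifMeasure]
  refine Integrable.smul_measure (integrable_sum_dirac A f) ?_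
  simp only [ne_eq, ENNReal.inv_eq_top, Nat.cast_eq_zero, Finset.card_eq_zero]
  exact hA

lemma integral_unif (f : ℝ → ℂ) :
    ∫ x, f x ∂(unifMeasure A) = (A.card : ℝ)⁻¹ • ∑ x ∈ A, f x := by
  rw [unifMeasure, integral_smul_measure, integral_finset_sum_measure
    (fun i _ => (integrable_const (f i)).congr (ae_eq_dirac f).symm)]
  congr 1
  · simp
  · exact Finset.sum_congr rfl fun x _ => integral_dirac f x

lemma exp_aux (l x : ℝ) :
    2 * (π:ℂ) * Complex.I * l * x = ((2 * π * l * x : ℝ) : ℂ) * Complex.I := by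
  push_cast; ring

lemma norm_exp_eq_one (l x : ℝ) : ‖Complex.exp (2 * π * Complex.I * l * x)‖ = 1 := by
  rw [exp_aux, Complex.norm_exp_ofReal_mul_I]

lemma memLp_exp (l : ℝ) :
    MemLp (fun x : ℝ => Complex.exp (2 * π * Complex.I * l * x)) 2 (unifMeasure A) := by
  apply MemLp.of_bound ?_ 1 ?_
  · apply Continuous.aestronglyMeasurable
    fun_prop
  · exact Filter.Eventually.of_forall fun x => le_of_eq (norm_exp_eq_one l x)

noncomputable def Efun (l : ℝ) : Lp ℂ 2 (unifMeasure A) := (memLp_exp A l).toLp _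

lemma conj_mul_exp (l m x : ℝ) :
    (starRingEnd ℂ) (Complex.exp (2 * π * Complex.I * l * x)) *
      Complex.exp (2 * π * Complex.I * m * x)
    = Complex.exp (2 * π * Complex.I * ((m:ℂ) - (l:ℂ)) * x) := by
  rw [← Complex.exp_conj, ← Complex.exp_add]
  congr 1
  simp only [map_mul, map_ofNat, Complex.conj_I, Complex.conj_ofReal]
  ring

lemma coe_Efun (l : ℝ) :
    (⇑(Efun A l) : ℝ → ℂ) =ᵐ[unifMeasure A]
      fun x : ℝ => Complex.exp (2 * π * Complex.I * l * x) :=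
  MemLp.coeFn_toLp _

lemma inner_E (l m : ℝ) :
    (inner ℂ (Efun A l) (Efun A m) : ℂ)
      = (A.card : ℝ)⁻¹ • ∑ x ∈ A, Complex.exp (2 * π * Complex.I * ((m:ℂ) - (l:ℂ)) * x) := by
  rw [MeasureTheory.L2.inner_def]
  rw [integral_congr_ae
      (g := fun x : ℝ => Complex.exp (2 * π * Complex.I * ((m:ℂ) - (l:ℂ)) * x)) ?_]
  · exact integral_unif A _
  · filter_upwards [coe_Efun A l, coe_Efun A m] with x h1 h2
    rw [RCLike.inner_apply', h1, h2, conj_mul_exp]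


noncomputable def chi (x : ℝ) : Lp ℂ 2 (unifMeasure A) :=
  indicatorConstLp 2 (measurableSet_singleton x) (measure_ne_top _ _) (1 : ℂ)

lemma coe_chi (x : ℝ) :
    (⇑(chi A x) : ℝ → ℂ) =ᵐ[unifMeasure A] ({x} : Set ℝ).indicator (fun _ => (1:ℂ)) :=
  indicatorConstLp_coeFn

lemma inner_chi (x y : ℝ) :
    (inner ℂ (chi A x) (chi A y) : ℂ)
      = (A.card : ℝ)⁻¹ • ∑ z ∈ A,
          (({x} : Set ℝ).indicator (fun _ => (1:ℂ)) z) * (({y} : Set ℝ).indicator (fun _ => (1:ℂ)) z) := by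
  rw [MeasureTheory.L2.inner_def]
  rw [integral_congr_ae (g := fun z : ℝ =>
      (({x} : Set ℝ).indicator (fun _ => (1:ℂ)) z) * (({y} : Set ℝ).indicator (fun _ => (1:ℂ)) z)) ?_]
  · exact integral_unif A _
  · filter_upwards [coe_chi A x, coe_chi A y] with z h1 h2
    rw [RCLike.inner_apply', h1, h2]
    congr 1
    by_cases hz : z = x <;> simp [Set.indicator_apply, hz]

lemma coe_sum (s : Finset ℝ) (f : ℝ → Lp ℂ 2 (unifMeasure A)) :
    (⇑(∑ x ∈ s, f x) : ℝ → ℂ) =ᵐ[unifMeasure A] fun y => ∑ x ∈ s, f x y := by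
  classical
  induction s using Finset.induction with
  | empty => simp only [Finset.sum_empty]; exact MeasureTheory.Lp.coeFn_zero (E := ℂ) 2 (unifMeasure A)
  | insert _ _ h ih =>
      filter_upwards [MeasureTheory.Lp.coeFn_add (f ‹_›) (∑ x ∈ ‹Finset ℝ›, f x), ih] with y h1 h2
      rw [Finset.sum_insert h, h1]
      simp only [Pi.add_apply, h2]
      rw [Finset.sum_insert h]


lemma eq_sum_chi (f : Lp ℂ 2 (unifMeasure A)) :
    f = ∑ x ∈ A, (f x : ℂ) • chi A x := by
  apply MeasureTheory.Lp.ext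
  have hterm : ∀ x ∈ A,
      (⇑((f x : ℂ) • chi A x) : ℝ → ℂ) =ᵐ[unifMeasure A]
        fun y => (f x : ℂ) * ({x} : Set ℝ).indicator (fun _ => (1:ℂ)) y := by
    intro x _
    filter_upwards [MeasureTheory.Lp.coeFn_smul (f x : ℂ) (chi A x), coe_chi A x] with y h1 h2
    rw [h1]
    simp only [Pi.smul_apply, h2, smul_eq_mul]
  have h1 := coe_sum A A (fun x => (f x : ℂ) • chi A x)
  have h2 : ∀ᵐ y ∂(unifMeasure A),
      (fun y => ∑ x ∈ A, ((f x : ℂ) • chi A x) y) y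
        = ∑ x ∈ A, (f x : ℂ) * ({x} : Set ℝ).indicator (fun _ => (1:ℂ)) y := by
    have := eventuallyEq_sum (l := ae (unifMeasure A)) hterm
    filter_upwards [this] with y hy
    have : (∑ x ∈ A, ⇑((f x : ℂ) • chi A x)) y
        = (∑ x ∈ A, fun z => (f x : ℂ) * ({x} : Set ℝ).indicator (fun _ => (1:ℂ)) z) y := by
      rw [hy]
    simpa [Finset.sum_apply] using this
  have h3 : (∀ᵐ y ∂(unifMeasure A),
      ∑ x ∈ A, (f x : ℂ) * ({x} : Set ℝ).indicator (fun _ => (1:ℂ)) y = f y) := by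
    rw [ae_unif_iff]
    intro y hy
    rw [Finset.sum_eq_single y]
    · simp [Set.indicator_apply]
    · intro x _ hxy
      simp [Set.indicator_apply, Ne.symm hxy]
    · intro hy'; exact absurd hy hy'
  exact (((h1.trans h2).trans h3)).symm

noncomputable def northo : ↥A → Lp ℂ 2 (unifMeasure A) :=
  fun x => ((Real.sqrt A.card : ℝ) : ℂ) • chi A (x : ℝ)

lemma orthonormal_northo (hA : A.Nonempty) : Orthonormal ℂ (northo A) := by
  classical
  rw [orthonormal_iff_ite]
  intro i j
  rw [northo, northo, inner_smul_left, inner_smul_right, inner_chi]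
  have hcard : (0:ℝ) < A.card := by exact_mod_cast Finset.card_pos.2 hA
  by_cases hij : i = j
  · subst hij
    rw [Finset.sum_eq_single (i:ℝ)]
    · have key : ((Real.sqrt A.card : ℝ) : ℂ) * ((Real.sqrt A.card : ℝ) : ℂ) = (A.card : ℂ) := by
        rw [← Complex.ofReal_mul, Real.mul_self_sqrt hcard.le]
        norm_cast
      have hc0 : (A.card : ℂ) ≠ 0 := by
        simp only [ne_eq, Nat.cast_eq_zero, Finset.card_eq_zero]
        exact Finset.nonempty_iff_ne_empty.1 hA
      simp only [Set.indicator_apply, Set.mem_singleton_iff, if_pos rfl, mul_one, if_pos rfl,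
        Complex.conj_ofReal, Complex.real_smul]
      push_cast
      field_simp
      rw [sq, key]
    · intro x _ hx
      simp [Set.indicator_apply, hx]
    · intro h; exact absurd i.2 h
  · have hij' : (i:ℝ) ≠ (j:ℝ) := fun h => hij (Subtype.ext h)
    rw [if_neg hij]
    have : ∀ z ∈ A, ({(i:ℝ)} : Set ℝ).indicator (fun _ => (1:ℂ)) z *
        ({(j:ℝ)} : Set ℝ).indicator (fun _ => (1:ℂ)) z = 0 := by
      intro z _
      by_cases hz : z = (i:ℝ)
      · have : z ≠ (j:ℝ) := by rw [hz]; exact hij'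
        simp [Set.indicator_apply, this]
      · simp [Set.indicator_apply, hz]
    rw [Finset.sum_congr rfl this]
    simp

lemma span_northo_top : ⊤ ≤ span ℂ (Set.range (northo A)) := by
  rintro f -
  rcases eq_or_ne A ∅ with rfl | hne
  · have : f = ∑ x ∈ (∅ : Finset ℝ), (f x : ℂ) • chi ∅ x := eq_sum_chi ∅ f
    simp only [Finset.sum_empty] at this
    rw [this]; exact Submodule.zero_mem _
  have hA : A.Nonempty := Finset.nonempty_of_ne_empty hne
  have hcard : (0:ℝ) < A.card := by exact_mod_cast Finset.card_pos.2 hA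
  have hs : (Real.sqrt A.card : ℝ) ≠ 0 := by positivity
  rw [eq_sum_chi A f]
  refine Submodule.sum_mem _ fun x hx => ?_
  have : chi A x = (((Real.sqrt A.card : ℝ) : ℂ))⁻¹ • northo A ⟨x, hx⟩ := by
    rw [northo, smul_smul, inv_mul_cancel₀ (by exact_mod_cast hs), one_smul]
  rw [this]
  exact Submodule.smul_mem _ _ (Submodule.smul_mem _ _
    (Submodule.subset_span ⟨⟨x, hx⟩, rfl⟩))

noncomputable def chiBasis (hA : A.Nonempty) : Module.Basis ↥A ℂ (Lp ℂ 2 (unifMeasure A)) :=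
  Module.Basis.mk (orthonormal_northo A hA).linearIndependent (span_northo_top A)

lemma finiteDimensional_Lp (hA : A.Nonempty) :
    FiniteDimensional ℂ (Lp ℂ 2 (unifMeasure A)) :=
  Module.Finite.of_basis (chiBasis A hA)

lemma finrank_Lp (hA : A.Nonempty) :
    Module.finrank ℂ (Lp ℂ 2 (unifMeasure A)) = A.card := by
  rw [Module.finrank_eq_card_basis (chiBasis A hA), Fintype.card_coe]


lemma exp_sub_cast (l m x : ℝ) :
    Complex.exp (2 * π * Complex.I * ((l:ℂ) - (m:ℂ)) * x)
      = Complex.exp (2 * π * Complex.I * ((l - m : ℝ) : ℂ) * x) := by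
  push_cast; ring_nf

theorem isSpectral_iff_orth (hA : A.Nonempty) :
    IsSpectralFinset A ↔ ∃ Λ : Finset ℝ, Λ.card = A.card ∧
      ∀ l ∈ Λ, ∀ m ∈ Λ, l ≠ m →
        ∑ x ∈ A, Complex.exp (2 * π * Complex.I * ((l - m : ℝ) : ℂ) * x) = 0 := by
  haveI := finiteDimensional_Lp A hA
  have hc0 : (A.card : ℂ) ≠ 0 := by
    simp only [ne_eq, Nat.cast_eq_zero, Finset.card_eq_zero]
    exact Finset.nonempty_iff_ne_empty.1 hA
  have hcR : ((A.card : ℝ))⁻¹ ≠ 0 := by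
    simp only [ne_eq, inv_eq_zero, Nat.cast_eq_zero, Finset.card_eq_zero]
    exact Finset.nonempty_iff_ne_empty.1 hA
  have inner_eq : ∀ l m : ℝ, (inner ℂ (Efun A l) (Efun A m) : ℂ)
      = (A.card : ℝ)⁻¹ • ∑ x ∈ A, Complex.exp (2 * π * Complex.I * ((m - l : ℝ) : ℂ) * x) := by
    intro l m
    rw [inner_E]
    congr 1
    exact Finset.sum_congr rfl fun x _ => exp_sub_cast m l x
  have inner_self : ∀ l : ℝ, (inner ℂ (Efun A l) (Efun A l) : ℂ) = 1 := by
    intro l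
    rw [inner_eq]
    have : ∀ x ∈ A, Complex.exp (2 * π * Complex.I * ((l - l : ℝ) : ℂ) * x) = 1 := by
      intro x _
      rw [sub_self]
      simp
    rw [Finset.sum_congr rfl this]
    simp only [Finset.sum_const, nsmul_eq_mul, mul_one, Complex.real_smul]
    push_cast
    field_simp
  constructor
  · rintro ⟨Λ, b, hb⟩
    have hE : ∀ l : Λ, (b l : Lp ℂ 2 (unifMeasure A)) = Efun A (l:ℝ) :=
      fun l => MeasureTheory.Lp.ext ((hb l).trans (coe_Efun A (l:ℝ)).symm)
    have hfam : (fun l : Λ => (b l : Lp ℂ 2 (unifMeasure A))) = fun l : Λ => Efun A (l:ℝ) :=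
      funext hE
    have li : LinearIndependent ℂ (fun l : Λ => Efun A (l:ℝ)) := by
      rw [← hfam]; exact b.orthonormal.linearIndependent
    have hinj : Set.InjOn (fun x : ℝ => Efun A x) Λ := by
      intro x hx y hy hxy
      have := li.injective (a₁ := ⟨x, hx⟩) (a₂ := ⟨y, hy⟩) hxy
      exact congrArg Subtype.val this
    have hfin : Λ.Finite := by
      apply Set.Finite.of_finite_image ?_ hinj
      rw [Set.image_eq_range]
      exact LinearIndependent.setFinite li.linearIndepOn_id
    haveI : Fintype ↥Λ := hfin.fintype
    have hcard_le : Fintype.card ↥Λ ≤ A.card := by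
      rw [← finrank_Lp A hA]
      exact li.fintype_card_le_finrank
    have hspan : Submodule.span ℂ (Set.range fun l : Λ => (b l : Lp ℂ 2 (unifMeasure A))) = ⊤ := by
      have h1 := b.dense_span
      have h2 : IsClosed ((Submodule.span ℂ
          (Set.range fun l : Λ => (b l : Lp ℂ 2 (unifMeasure A)))) : Set (Lp ℂ 2 (unifMeasure A))) :=
        Submodule.closed_of_finiteDimensional _
      rw [← IsClosed.submodule_topologicalClosure_eq h2]
      exact h1
    have hcard_ge : A.card ≤ Fintype.card ↥Λ := by
      rw [← finrank_Lp A hA]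
      exact finrank_le_of_span_eq_top hspan
    refine ⟨hfin.toFinset, ?_, ?_⟩
    · rw [← le_antisymm hcard_le hcard_ge]
      simp [Set.Finite.card_toFinset]
    · intro l hl m hm hlm
      have hl' : l ∈ Λ := by simpa using hl
      have hm' : m ∈ Λ := by simpa using hm
      have : (inner ℂ (b ⟨m, hm'⟩) (b ⟨l, hl'⟩) : ℂ) = 0 := by
        have := b.orthonormal
        rw [orthonormal_iff_ite] at this
        rw [this]
        rw [if_neg]
        intro h
        exact hlm (congrArg Subtype.val h).symm
      rw [hE ⟨m, hm'⟩, hE ⟨l, hl'⟩, inner_eq] at this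
      rcases smul_eq_zero.1 this with h | h
      · exact absurd h hcR
      · exact h
  · rintro ⟨Λ, hcard, horth⟩
    have hΛne : Λ.Nonempty := by
      rw [← Finset.card_pos, hcard, Finset.card_pos]
      exact hA
    haveI : Nonempty ↥(↑Λ : Set ℝ) := Set.Nonempty.to_subtype (by exact_mod_cast hΛne)
    set v : ↥(↑Λ : Set ℝ) → Lp ℂ 2 (unifMeasure A) := fun l => Efun A (l:ℝ) with hv
    have hon : Orthonormal ℂ v := by
      rw [orthonormal_iff_ite]
      intro i j
      by_cases hij : i = j
      · subst hij
        rw [if_pos rfl, hv]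
        exact inner_self (i:ℝ)
      · rw [if_neg hij, hv]
        simp only
        rw [inner_eq]
        have : (j:ℝ) ∈ Λ := by exact_mod_cast j.2
        rw [horth (j:ℝ) this (i:ℝ) (by exact_mod_cast i.2)
          (fun h => hij (Subtype.ext (by exact_mod_cast h.symm)))]
        simp
    have hspan : Submodule.span ℂ (Set.range v) = ⊤ := by
      apply hon.linearIndependent.span_eq_top_of_card_eq_finrank
      rw [finrank_Lp A hA, ← hcard]
      exact_mod_cast Fintype.card_coe Λ
    refine ⟨(↑Λ : Set ℝ), HilbertBasis.mk hon (by rw [hspan]; exact Submodule.le_topologicalClosure _), ?_⟩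
    intro l
    have hb : ⇑(HilbertBasis.mk hon (show ⊤ ≤ (Submodule.span ℂ (Set.range v)).topologicalClosure by
        rw [hspan]; exact Submodule.le_topologicalClosure _)) = v := HilbertBasis.coe_mk hon _
    rw [show ((HilbertBasis.mk hon _ : HilbertBasis _ ℂ _) l : Lp ℂ 2 (unifMeasure A)) = v l from congrFun hb l]
    exact coe_Efun A (l:ℝ)

end SpectralAux

namespace SpectralAux

def IsInt (x : ℝ) : Prop := ∃ m : ℤ, x = (m : ℝ)

lemma exp_eq_one_iff' (x : ℝ) :
    Complex.exp (2 * π * Complex.I * x) = 1 ↔ IsInt x := by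
  rw [Complex.exp_eq_one_iff]
  constructor
  · rintro ⟨m, hm⟩
    refine ⟨m, ?_⟩
    have h2 : (2 * π * Complex.I) ≠ 0 := by
      simp [Real.pi_ne_zero, Complex.I_ne_zero, Complex.ofReal_ne_zero]
    have : (x : ℂ) * (2 * π * Complex.I) = (m : ℂ) * (2 * π * Complex.I) := by
      rw [← hm]; push_cast; ring
    have := mul_right_cancel₀ h2 this
    exact_mod_cast this
  · rintro ⟨m, rfl⟩
    exact ⟨m, by push_cast; ring⟩

lemma exp_eq_neg_one_iff' (x : ℝ) :
    Complex.exp (2 * π * Complex.I * x) = -1 ↔ ∃ m : ℤ, x = m + 1/2 := by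
  have hpi : Complex.exp (π * Complex.I) = -1 := Complex.exp_pi_mul_I
  rw [← hpi, Complex.exp_eq_exp_iff_exists_int]
  constructor
  · rintro ⟨m, hm⟩
    have h2 : (2 * π * Complex.I) ≠ 0 := by
      simp [Real.pi_ne_zero, Complex.I_ne_zero, Complex.ofReal_ne_zero]
    have : (x : ℂ) * (2 * π * Complex.I) = ((m : ℂ) + 1/2) * (2 * π * Complex.I) := by
      rw [show (x:ℂ) * (2 * π * Complex.I) = 2 * π * Complex.I * x by ring, hm]
      push_cast; ring
    have h5 := mul_right_cancel₀ h2 this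
    have h4 : ((x : ℝ) : ℂ) = (((m : ℝ) + 1/2 : ℝ) : ℂ) := by rw [h5]; push_cast; ring
    exact ⟨m, Complex.ofReal_inj.1 h4⟩
  · rintro ⟨m, rfl⟩
    exact ⟨m, by push_cast; ring⟩

lemma conj_exp_two_pi (x : ℝ) :
    (starRingEnd ℂ) (Complex.exp (2 * π * Complex.I * x))
      = (Complex.exp (2 * π * Complex.I * x))⁻¹ := by
  rw [← Complex.exp_conj, ← Complex.exp_neg]
  congr 1
  simp only [map_mul, map_ofNat, Complex.conj_I, Complex.conj_ofReal]
  ring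

lemma norm_exp_one (x : ℝ) : ‖Complex.exp (2 * π * Complex.I * x)‖ = 1 := by
  rw [show (2 * (π:ℂ) * Complex.I * x) = ((2 * π * x : ℝ) : ℂ) * Complex.I by push_cast; ring]
  rw [Complex.norm_exp_ofReal_mul_I]

/-- The vanishing condition for the exponential sum. -/
def Qcond (n : ℕ) (a t : ℝ) : Prop :=
  ¬ IsInt t ∧
    ((IsInt (n * t) ∧ IsInt ((a + 1) * t)) ∨
      (¬ IsInt (n * t) ∧ IsInt (((n : ℝ) - 2) * t) ∧ ∃ m : ℤ, a * t = m + 1/2))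

lemma key_lemma (u : ℕ) (hu : 1 ≤ u) (a t : ℝ) :
    Complex.exp (2 * π * Complex.I * t * a)
        + ∑ k ∈ Finset.range (u + 1), Complex.exp (2 * π * Complex.I * t * k) = 0
      ↔ Qcond (u + 2) a t := by
  classical
  set z : ℂ := Complex.exp (2 * π * Complex.I * t) with hz
  set w : ℂ := Complex.exp (2 * π * Complex.I * t * a) with hw
  have hzk : ∀ k : ℕ, Complex.exp (2 * π * Complex.I * t * k) = z ^ k := by
    intro k
    rw [hz, ← Complex.exp_nat_mul]
    congr 1; push_cast; ring
  have hz0 : z ≠ 0 := Complex.exp_ne_zero _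
  have hw0 : w ≠ 0 := Complex.exp_ne_zero _
  have hwnorm : ‖w‖ = 1 := by
    rw [hw, show (2 * (π:ℂ) * Complex.I * t * a) = 2 * π * Complex.I * ((t*a : ℝ):ℂ) by
      push_cast; ring]
    exact norm_exp_one _
  have hconjz : (starRingEnd ℂ) z = z⁻¹ := by
    rw [hz, show (2 * (π:ℂ) * Complex.I * t) = 2 * π * Complex.I * ((t : ℝ):ℂ) by push_cast; ring]
    exact conj_exp_two_pi t
  have hconjw : (starRingEnd ℂ) w = w⁻¹ := by
    rw [hw, show (2 * (π:ℂ) * Complex.I * t * a) = 2 * π * Complex.I * ((t*a : ℝ):ℂ) by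
      push_cast; ring]
    exact conj_exp_two_pi _
  have hz1_iff : z = 1 ↔ IsInt t := by
    rw [hz, show (2 * (π:ℂ) * Complex.I * t) = 2 * π * Complex.I * ((t : ℝ):ℂ) by push_cast; ring]
    exact exp_eq_one_iff' t
  have hzn_iff : z ^ (u+2) = 1 ↔ IsInt ((u+2 : ℕ) * t) := by
    rw [hz, ← Complex.exp_nat_mul,
      show ((u+2:ℕ):ℂ) * (2 * π * Complex.I * t) = 2 * π * Complex.I * ((((u+2:ℕ) * t : ℝ)):ℂ) by
        push_cast; ring]
    exact exp_eq_one_iff' _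
  have hzu_iff : z ^ u = 1 ↔ IsInt ((u : ℕ) * t) := by
    rw [hz, ← Complex.exp_nat_mul,
      show ((u:ℕ):ℂ) * (2 * π * Complex.I * t) = 2 * π * Complex.I * ((((u:ℕ) * t : ℝ)):ℂ) by
        push_cast; ring]
    exact exp_eq_one_iff' _
  have hwz_iff : w * z = 1 ↔ IsInt ((a+1) * t) := by
    rw [hw, hz, ← Complex.exp_add,
      show (2 * (π:ℂ) * Complex.I * t * a + 2 * π * Complex.I * t)
        = 2 * π * Complex.I * (((a+1) * t : ℝ):ℂ) by push_cast; ring]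
    exact exp_eq_one_iff' _
  have hwneg_iff : w = -1 ↔ ∃ m : ℤ, a * t = m + 1/2 := by
    rw [hw, show (2 * (π:ℂ) * Complex.I * t * a) = 2 * π * Complex.I * ((a * t : ℝ):ℂ) by
      push_cast; ring]
    exact exp_eq_neg_one_iff' _
  have hcast : ((u+2:ℕ):ℝ) - 2 = (u:ℝ) := by push_cast; ring
  rw [Finset.sum_congr rfl (fun k _ => hzk k)]
  simp only [Qcond, hcast]
  constructor
  · intro h
    -- z ≠ 1
    have hz1 : z ≠ 1 := by
      intro h1
      rw [h1] at h
      simp only [one_pow, Finset.sum_const, Finset.card_range, nsmul_eq_mul, mul_one] at h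
      have hww : w = ((-((u:ℝ)+1) : ℝ) : ℂ) := by push_cast at h ⊢; linear_combination h
      have h6 := congrArg norm hww
      rw [hwnorm, Complex.norm_real, Real.norm_eq_abs, abs_neg,
        _root_.abs_of_nonneg (by positivity : (0:ℝ) ≤ (u:ℝ)+1)] at h6
      have hu1 : (1:ℝ) ≤ u := by exact_mod_cast hu
      nlinarith
    have hS : ∑ k ∈ Finset.range (u+1), z ^ k = (z ^ (u+1) - 1)/(z - 1) := geom_sum_eq hz1 _
    rw [hS] at h
    have hzm1 : z - 1 ≠ 0 := sub_ne_zero.2 hz1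
    -- h1' : w * (z - 1) = 1 - z^u * z
    have h1' : w * (z - 1) = 1 - z ^ u * z := by
      field_simp at h
      rw [pow_succ] at h
      linear_combination h
    -- conjugate equation
    have h2c := congrArg (starRingEnd ℂ) h1'
    simp only [map_mul, map_sub, map_one, map_pow, hconjz, hconjw] at h2c
    have h2' : w * (1 - z ^ u * z) = z ^ u * (z - 1) := by
      have hzu0 : z ^ u ≠ 0 := pow_ne_zero _ hz0
      have hwinv : w * w⁻¹ = 1 := mul_inv_cancel₀ hw0
      have hzinv : z * z⁻¹ = 1 := mul_inv_cancel₀ hz0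
      have hzuinv : z ^ u * z⁻¹ ^ u = 1 := by rw [← mul_pow, hzinv, one_pow]
      have h2'z : w * (1 - z ^ u * z) * z = z ^ u * (z - 1) * z := by
        linear_combination (w * z ^ (u + 2)) * h2c + (z ^ (u + 2) - z ^ (u + 2) * z⁻¹) * hwinv
          - z ^ (u + 1) * hzinv - w * z * (z * z⁻¹) * hzuinv - w * z * hzinv
      exact mul_right_cancel₀ hz0 h2'z
    have key : (z ^ u * z * z - 1) * (z ^ u - 1) = 0 := by
      linear_combination (z-1) * h2' - (1 - z^u*z) * h1'
    have hnt_or : z ^ (u+2) = 1 ∨ z ^ u = 1 := by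
      rcases mul_eq_zero.1 key with hk | hk
      · left; rw [show z^(u+2) = z^u*z*z by ring]; linear_combination hk
      · right; linear_combination hk
    refine ⟨(fun hint => hz1 (hz1_iff.2 hint)), ?_⟩
    by_cases hzn : z ^ (u+2) = 1
    · left
      refine ⟨hzn_iff.1 hzn, hwz_iff.1 ?_⟩
      -- w = z⁻¹
      have hy : z ^ u * z * z = 1 := by
        rw [show z^u*z*z = z^(u+2) by ring]; exact hzn
      -- from h1' : w (z-1) = 1 - z^u z, and z^u z = z⁻¹
      have : w * (z - 1) * z = (z - 1) := by
        have : z ^ u * z = z⁻¹ := by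
          field_simp
          linear_combination hy
        rw [h1', this]
        field_simp
      have := mul_right_cancel₀ hzm1 (by linear_combination this : w * z * (z-1) = 1 * (z-1))
      exact this
    · right
      have hzu : z ^ u = 1 := hnt_or.resolve_left hzn
      refine ⟨fun hint => hzn ?_, hzu_iff.1 hzu, hwneg_iff.1 ?_⟩
      · exact hzn_iff.2 hint
      · -- w = -1
        rw [hzu, one_mul] at h1'
        have : w * (z-1) = -(z-1) := by linear_combination h1'
        have := mul_right_cancel₀ hzm1 (by linear_combination this : w * (z-1) = -1 * (z-1))
        exact this
  · rintro ⟨hnint, hcase⟩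
    have hz1 : z ≠ 1 := fun h1 => hnint (hz1_iff.1 h1)
    have hzm1 : z - 1 ≠ 0 := sub_ne_zero.2 hz1
    rcases hcase with ⟨hnt, hat⟩ | ⟨-, hut, hhalf⟩
    · have hzn : z ^ (u+2) = 1 := hzn_iff.2 hnt
      have hwz : w * z = 1 := hwz_iff.2 hat
      rw [geom_sum_eq hz1]
      have h1 : z ^ (u+1) * z = 1 := by rw [← pow_succ]; exact hzn
      have hinv : z ^ (u+1) = z⁻¹ := by field_simp; linear_combination h1
      have hwinv : w = z⁻¹ := by field_simp; linear_combination hwz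
      rw [hinv, hwinv]
      field_simp
      ring
    · have hzu : z ^ u = 1 := hzu_iff.2 hut
      have hwneg : w = -1 := hwneg_iff.2 hhalf
      rw [Finset.sum_range_succ, geom_sum_eq hz1, hzu, hwneg]
      simp

end SpectralAux

namespace SpectralAux

/-- key integer divisibility lemma for within-class differences -/
lemma int_core (n q : ℕ) (p j k : ℤ) (hq : 1 ≤ q) (hn : 3 ≤ n)
    (hcop : Nat.Coprime p.natAbs q) (hmain : (p + q) * j = k * q * n)
    (hnj : ¬ (n:ℤ) ∣ j) :
    ((q : ℤ) * ((n / Nat.gcd n (p + q).natAbs : ℕ) : ℤ)) ∣ j ∧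
      ¬ (Nat.gcd n (p + q).natAbs : ℤ) ∣ (j / ((q:ℤ) * ((n / Nat.gcd n (p + q).natAbs : ℕ) : ℤ))) := by
  set d : ℕ := Nat.gcd n (p + q).natAbs with hd
  have hn0 : 0 < n := by omega
  have hd0 : 0 < d := Nat.gcd_pos_of_pos_left _ hn0
  set n' : ℕ := n / d with hn'
  have hdn : d ∣ n := Nat.gcd_dvd_left _ _
  have hnn' : n = d * n' := by rw [hn', Nat.mul_div_cancel' hdn]
  have hn'0 : 0 < n' := by
    rcases Nat.eq_zero_or_pos n' with h | h
    · rw [h, mul_zero] at hnn'; omega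
    · exact h
  -- q ∣ j
  have hcop_q_p : IsCoprime (q : ℤ) p := by
    rw [Int.isCoprime_iff_gcd_eq_one]
    have : Int.gcd (q:ℤ) p = Nat.gcd p.natAbs q := by
      rw [Int.gcd, Int.natAbs_natCast, Nat.gcd_comm]
    rw [this, hcop]
  have hcop_q_pq : IsCoprime (q : ℤ) (p + q) := by
    simpa using hcop_q_p.add_mul_left_right 1
  have hqj : (q : ℤ) ∣ j := by
    have h2 : (q : ℤ) ∣ (p + q) * j := ⟨k * n, by linarith [hmain]⟩
    exact hcop_q_pq.dvd_of_dvd_mul_left h2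
  obtain ⟨j₂, rfl⟩ := hqj
  have hq0 : (q : ℤ) ≠ 0 := by exact_mod_cast (by omega : q ≠ 0)
  have hmain2 : (p + q) * j₂ = k * n := by
    have := hmain
    have h3 : (q:ℤ) * ((p + q) * j₂) = (q:ℤ) * (k * n) := by ring_nf; ring_nf at this; linarith
    exact mul_left_cancel₀ hq0 h3
  -- (n' : ℤ) ∣ j₂
  have hdpq : (d : ℤ) ∣ (p + q) := by
    have h6 : d ∣ (p+q).natAbs := Nat.gcd_dvd_right _ _
    exact Int.dvd_natAbs.1 (Int.natCast_dvd_natCast.2 h6)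
  obtain ⟨s, hs⟩ := hdpq
  have hcop' : Nat.Coprime n' s.natAbs := by
    have : s.natAbs = (p+q).natAbs / d := by
      rw [hs, Int.natAbs_mul, Int.natAbs_natCast]
      exact (Nat.mul_div_cancel_left _ hd0).symm
    rw [this, hn']
    exact Nat.coprime_div_gcd_div_gcd hd0
  have hn'j₂ : (n' : ℤ) ∣ j₂ := by
    have h4 : (n' : ℤ) ∣ s * j₂ := by
      have h5 : (d : ℤ) * ((n':ℤ) * k) = (d:ℤ) * (s * j₂) := by
        rw [hs] at hmain2
        rw [hnn'] at hmain2
        push_cast at hmain2 ⊢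
        linarith [hmain2]
      have hd0' : (d : ℤ) ≠ 0 := by exact_mod_cast hd0.ne'
      exact ⟨k, (mul_left_cancel₀ hd0' h5).symm⟩
    have hco : IsCoprime (n' : ℤ) s := by
      rw [Int.isCoprime_iff_gcd_eq_one, Int.gcd]
      simpa using hcop'
    exact hco.dvd_of_dvd_mul_left h4
  obtain ⟨e, rfl⟩ := hn'j₂
  refine ⟨⟨e, by push_cast; ring⟩, ?_⟩
  have hM0 : ((q:ℤ) * (n':ℤ)) ≠ 0 := by
    apply mul_ne_zero hq0
    exact_mod_cast hn'0.ne'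
  have hdiv : (q:ℤ) * ((n':ℤ) * e) / ((q:ℤ) * (n':ℤ)) = e := by
    rw [show (q:ℤ) * ((n':ℤ) * e) = ((q:ℤ) * (n':ℤ)) * e by ring]
    exact Int.mul_ediv_cancel_left _ hM0
  rw [hdiv]
  intro hde
  obtain ⟨e', he'⟩ := hde
  apply hnj
  refine ⟨q * e', ?_⟩
  rw [he', hnn']
  push_cast
  ring

/-- within-class: translate the real conditions to the integer equation -/
lemma D1_int (q : ℕ) (p : ℤ) (n : ℕ) (a : ℝ) (hq : (q:ℝ) ≠ 0) (ha : a = (p:ℝ) / q)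
    {t : ℝ} {j k : ℤ} (hj : (n:ℝ) * t = (j:ℝ)) (hk : (a+1) * t = (k:ℝ)) :
    (p + q) * j = k * q * n := by
  have hp : (p:ℝ) = a * q := by rw [ha]; field_simp
  have hreal : ((p:ℝ) + q) * ((n:ℝ) * t) = (k:ℝ) * q * n := by
    linear_combination ((n:ℝ)*t)*hp + (q:ℝ)*(n:ℝ)*hk
  rw [hj] at hreal
  exact_mod_cast hreal

/-- cross-class: translate the real conditions to the integer equation -/
lemma D2_int (q : ℕ) (p : ℤ) (n : ℕ) (a : ℝ) (hq : (q:ℝ) ≠ 0) (ha : a = (p:ℝ) / q)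
    {t : ℝ} {j k : ℤ} (hj : ((n:ℝ) - 2) * t = (j:ℝ)) (hk : a * t = (k:ℝ) + 1/2) :
    2 * p * j = (2*k+1) * q * ((n:ℤ) - 2) := by
  have hp : (p:ℝ) = a * q := by rw [ha]; field_simp
  have hreal : 2 * (p:ℝ) * (((n:ℝ) - 2) * t) = (2*(k:ℝ)+1) * q * ((n:ℝ) - 2) := by
    linear_combination (2*((n:ℝ)-2)*t) * hp + (2*(q:ℝ)*((n:ℝ)-2)) * hk
  rw [hj] at hreal
  exact_mod_cast hreal

end SpectralAux

namespace SpectralAux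

/-- Construction direction -/
theorem main_nt_rev (n q : ℕ) (p : ℤ) (hn : 3 ≤ n) (hq : 1 ≤ q)
    (hcop : Nat.Coprime p.natAbs q) (a : ℝ) (ha : a = (p:ℝ) / (q:ℝ))
    (hdvd : (n:ℤ) ∣ p + q) :
    ∃ Λ : Finset ℝ, Λ.card = n ∧ ∀ l ∈ Λ, ∀ m ∈ Λ, l ≠ m → Qcond n a (l - m) := by
  classical
  obtain ⟨s, hs⟩ := hdvd
  have hn0 : (0:ℕ) < n := by omega
  have hn0R : (n:ℝ) ≠ 0 := by exact_mod_cast hn0.ne'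
  have hq0R : (q:ℝ) ≠ 0 := by exact_mod_cast (by omega : q ≠ 0)
  have hnq : Nat.Coprime n q := by
    set g := Nat.gcd n q with hg
    have h1 : (g : ℤ) ∣ (n:ℤ) := by exact_mod_cast Nat.gcd_dvd_left n q
    have h2 : (g : ℤ) ∣ (q:ℤ) := by exact_mod_cast Nat.gcd_dvd_right n q
    have h3 : (g : ℤ) ∣ p + q := h1.trans ⟨s, hs⟩
    have h4 : (g : ℤ) ∣ p := by
      have := dvd_sub h3 h2
      simpa using this
    have h5 : g ∣ p.natAbs := by
      have := Int.natAbs_dvd_natAbs.2 h4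
      simpa using this
    have h6 : g ∣ Nat.gcd p.natAbs q := Nat.dvd_gcd h5 (Nat.gcd_dvd_right n q)
    rw [hcop] at h6
    exact Nat.dvd_one.1 h6
  have hinj : Function.Injective (fun j : ℕ => (q:ℝ) * j / n) := by
    intro j j' h
    simp only at h
    field_simp at h
    exact_mod_cast h
  refine ⟨(Finset.range n).image (fun j : ℕ => (q:ℝ) * j / n), ?_, ?_⟩
  · rw [Finset.card_image_of_injective _ hinj, Finset.card_range]
  · intro l hl m hm hlm
    simp only [Finset.mem_image, Finset.mem_range] at hl hm
    obtain ⟨j, hj, rfl⟩ := hl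
    obtain ⟨j', hj', rfl⟩ := hm
    have hjj' : j ≠ j' := by rintro rfl; exact hlm rfl
    set Δ : ℤ := (j:ℤ) - j' with hΔdef
    have hΔ0 : Δ ≠ 0 := sub_ne_zero.2 (by exact_mod_cast hjj')
    have hΔlt : Δ.natAbs < n := by omega
    have ht : ((q:ℝ) * j / n) - ((q:ℝ) * j' / n) = (q:ℝ) * (Δ:ℝ) / n := by
      rw [hΔdef]
      push_cast
      field_simp
      try ring
    rw [ht]
    have hnt : (n:ℝ) * ((q:ℝ)*(Δ:ℝ)/n) = (((q:ℤ)*Δ : ℤ):ℝ) := by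
      push_cast
      field_simp
    refine ⟨?_, Or.inl ⟨⟨(q:ℤ)*Δ, hnt⟩, ⟨s*Δ, ?_⟩⟩⟩
    · rintro ⟨m0, hm0⟩
      have hZ : (q:ℤ) * Δ = n * m0 := by
        have : (q:ℝ) * (Δ:ℝ) = (n:ℝ) * (m0:ℝ) := by
          rw [← hm0]; field_simp
        exact_mod_cast this
      have hdvd2 : (n:ℤ) ∣ (q:ℤ) * Δ := ⟨m0, hZ⟩
      have hcopZ : IsCoprime (n:ℤ) (q:ℤ) := by
        rw [Int.isCoprime_iff_gcd_eq_one, Int.gcd, Int.natAbs_natCast, Int.natAbs_natCast]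
        exact hnq
      have h8 : (n:ℤ) ∣ Δ := hcopZ.dvd_of_dvd_mul_left hdvd2
      have h9 : (n:ℤ) ≤ |Δ| := Int.le_of_dvd (abs_pos.mpr hΔ0) ((dvd_abs _ _).2 h8)
      rw [Int.abs_eq_natAbs] at h9
      have : (n:ℤ) < n := lt_of_le_of_lt h9 (by exact_mod_cast hΔlt)
      omega
    · have ha1 : a + 1 = ((p:ℝ)+q)/q := by rw [ha]; field_simp
      have hpq : ((p:ℝ) + q) = (n:ℝ) * (s:ℝ) := by exact_mod_cast congrArg (Int.cast : ℤ → ℝ) hs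
      rw [ha1, hpq]
      push_cast
      field_simp

end SpectralAux

namespace SpectralAux

lemma rational_of_spectrum (n : ℕ) (hn : 3 ≤ n) (a : ℝ)
    (Λ : Finset ℝ) (hcard : Λ.card = n)
    (hQ : ∀ l ∈ Λ, ∀ m ∈ Λ, l ≠ m → Qcond n a (l - m)) :
    ∃ r : ℚ, a = (r : ℝ) := by
  have h2 : 1 < Λ.card := by omega
  obtain ⟨l, hl, m, hm, hlm⟩ := Finset.one_lt_card.1 h2
  obtain ⟨hni, hd⟩ := hQ l hl m hm hlm
  set t := l - m with htdef
  have ht0 : t ≠ 0 := fun h0 => hni ⟨0, by rw [h0]; simp⟩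
  have hn0R : (n:ℝ) ≠ 0 := by
    have : (0:ℕ) < n := by omega
    exact_mod_cast this.ne'
  rcases hd with ⟨⟨j, hj⟩, ⟨k, hk⟩⟩ | ⟨-, ⟨j, hj⟩, ⟨k, hk⟩⟩
  · have hj0 : (j:ℝ) ≠ 0 := by
      rw [← hj]
      exact mul_ne_zero hn0R ht0
    refine ⟨((k*(n:ℤ) - j : ℤ) : ℚ)/((j:ℤ) : ℚ), ?_⟩
    have h3 : (a+1) * (j:ℝ) = (k:ℝ)*n := by
      rw [← hj]
      linear_combination (n:ℝ)*hk
    push_cast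
    field_simp
    push_cast at hj0 ⊢
    linarith [h3]
  · have hn2R : (n:ℝ) - 2 ≠ 0 := by
      have : (3:ℝ) ≤ n := by exact_mod_cast hn
      linarith
    have hj0 : (j:ℝ) ≠ 0 := by
      rw [← hj]
      exact mul_ne_zero hn2R ht0
    refine ⟨((2*k+1)*((n:ℤ) - 2) : ℚ)/((2*j:ℤ) : ℚ), ?_⟩
    have h3 : 2 * a * (j:ℝ) = (2*(k:ℝ)+1)*((n:ℝ)-2) := by
      rw [← hj]
      linear_combination (2*((n:ℝ)-2))*hk
    push_cast
    field_simp
    push_cast at hj0 ⊢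
    linarith [h3]

end SpectralAux

namespace SpectralAux

theorem main_nt_fwd (n : ℕ) (hn : 3 ≤ n) (a : ℝ)
    (Λ : Finset ℝ) (hcard : Λ.card = n)
    (hQ : ∀ l ∈ Λ, ∀ m ∈ Λ, l ≠ m → Qcond n a (l - m)) :
    ∃ (p : ℤ) (q : ℕ), 1 ≤ q ∧ Nat.Coprime p.natAbs q ∧ a = (p : ℝ) / (q : ℝ) ∧
      (n : ℤ) ∣ p + (q : ℤ) := by
  classical
  obtain ⟨r, hr⟩ := rational_of_spectrum n hn a Λ hcard hQ
  set p : ℤ := r.num with hp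
  set q : ℕ := r.den with hqdef
  have hq : 1 ≤ q := r.pos
  have hcop : Nat.Coprime p.natAbs q := r.reduced
  have ha : a = (p:ℝ)/(q:ℝ) := by rw [hr, Rat.cast_def]
  refine ⟨p, q, hq, hcop, ha, ?_⟩
  -- setup
  have hn0 : (0:ℕ) < n := by omega
  have hn0R : (n:ℝ) ≠ 0 := by exact_mod_cast hn0.ne'
  have hq0R : (q:ℝ) ≠ 0 := by exact_mod_cast (by omega : q ≠ 0)
  have hn2R : (n:ℝ) - 2 ≠ 0 := by
    have : (3:ℝ) ≤ n := by exact_mod_cast hn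
    linarith
  have hn2Z : ((n:ℤ) - 2) ≠ 0 := by omega
  set d : ℕ := Nat.gcd n (p + q).natAbs with hd
  have hd0 : 0 < d := Nat.gcd_pos_of_pos_left _ hn0
  have hdn : d ∣ n := Nat.gcd_dvd_left _ _
  set n' : ℕ := n / d with hn'
  have hnn' : n = d * n' := by rw [hn', Nat.mul_div_cancel' hdn]
  have hn'0 : 0 < n' := by
    rcases Nat.eq_zero_or_pos n' with h | h
    · rw [h, mul_zero] at hnn'; omega
    · exact h
  set M : ℤ := (q:ℤ) * (n' : ℤ) with hM
  have hM0 : M ≠ 0 := by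
    rw [hM]
    exact mul_ne_zero (by exact_mod_cast (by omega : q ≠ 0)) (by exact_mod_cast hn'0.ne')
  -- it suffices to show d = n
  suffices hsuf : d = n by
    have h1 : n ∣ (p + q).natAbs := hsuf ▸ Nat.gcd_dvd_right n (p + q).natAbs
    exact Int.dvd_natAbs.1 (Int.natCast_dvd_natCast.2 h1)
  -- the relation
  set Rel : ℝ → ℝ → Prop := fun x y => ∃ j : ℤ, (n:ℝ)*(x - y) = (j:ℝ) with hRel
  have hrefl : ∀ x, Rel x x := fun x => ⟨0, by simp⟩
  have hsymm : ∀ x y, Rel x y → Rel y x := by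
    rintro x y ⟨j, hj⟩
    exact ⟨-j, by push_cast; linarith [hj]⟩
  have htrans : ∀ x y z, Rel x y → Rel y z → Rel x z := by
    rintro x y z ⟨j, hj⟩ ⟨j', hj'⟩
    exact ⟨j + j', by push_cast; linarith [hj, hj']⟩
  have hne_of_nrel : ∀ x y, ¬ Rel x y → x ≠ y := by
    rintro x y hnr rfl
    exact hnr (hrefl x)
  -- within-class gives first disjunct
  have hD1 : ∀ x ∈ Λ, ∀ y ∈ Λ, x ≠ y → Rel x y → ∃ k : ℤ, (a+1)*(x-y) = (k:ℝ) := by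
    intro x hx y hy hxy hrel
    obtain ⟨hni, hcase⟩ := hQ x hx y hy hxy
    rcases hcase with ⟨-, h⟩ | ⟨hnrel, -, -⟩
    · exact h
    · exact absurd hrel hnrel
  -- cross-class gives second disjunct, converted to integers
  have hD2 : ∀ x ∈ Λ, ∀ y ∈ Λ, ¬ Rel x y →
      ∃ j k : ℤ, ((n:ℝ) - 2)*(x-y) = (j:ℝ) ∧ 2*p*j = (2*k+1) * q * ((n:ℤ) - 2) := by
    intro x hx y hy hnrel
    obtain ⟨hni, hcase⟩ := hQ x hx y hy (hne_of_nrel x y hnrel)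
    rcases hcase with ⟨hrel, -⟩ | ⟨-, ⟨j, hj⟩, ⟨k, hk⟩⟩
    · exact absurd hrel hnrel
    · exact ⟨j, k, hj, D2_int q p n a hq0R ha hj hk⟩
  -- claim B : at most two classes
  have hB : ∀ x ∈ Λ, ∀ y ∈ Λ, ∀ z ∈ Λ, ¬ Rel x y → ¬ Rel y z → Rel x z := by
    intro x hx y hy z hz hxy hyz
    by_contra hxz
    obtain ⟨j1, k1, hj1, he1⟩ := hD2 x hx y hy hxy
    obtain ⟨j2, k2, hj2, he2⟩ := hD2 y hy z hz hyz
    obtain ⟨j3, k3, hj3, he3⟩ := hD2 x hx z hz hxz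
    have hsum : j3 = j1 + j2 := by
      have hreal : (j3:ℝ) = (j1:ℝ) + (j2:ℝ) := by
        rw [← hj1, ← hj2, ← hj3]; ring
      exact_mod_cast hreal
    rw [hsum] at he3
    have hqn2 : ((q:ℤ) * ((n:ℤ)-2)) ≠ 0 := mul_ne_zero (by exact_mod_cast (by omega : q ≠ 0)) hn2Z
    have : (2*k3+1) * ((q:ℤ) * ((n:ℤ)-2)) = (2*(k1+k2)+2) * ((q:ℤ) * ((n:ℤ)-2)) := by
      linear_combination he1 + he2 - he3
    have := mul_right_cancel₀ hqn2 this
    omega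
  -- class structure lemma
  have hclass : ∀ l₀ ∈ Λ, ∃ J : ℝ → ℤ,
      (∀ x ∈ Λ.filter (fun x => Rel x l₀), (n:ℝ)*(x - l₀) = (J x : ℝ)) ∧
      J l₀ = 0 ∧
      (∀ x ∈ Λ.filter (fun x => Rel x l₀), M ∣ J x) ∧
      (∀ x ∈ Λ.filter (fun x => Rel x l₀), ∀ y ∈ Λ.filter (fun x => Rel x l₀), x ≠ y →
        ¬ (d:ℤ) ∣ (J x / M - J y / M)) := by
    intro l₀ hl₀
    set J : ℝ → ℤ := fun x => if h : Rel x l₀ then h.choose else 0 with hJ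
    have hJspec : ∀ x ∈ Λ.filter (fun x => Rel x l₀), (n:ℝ)*(x - l₀) = (J x : ℝ) := by
      intro x hx
      rw [Finset.mem_filter] at hx
      rw [hJ]
      simp only [dif_pos hx.2]
      exact hx.2.choose_spec
    have hJl₀ : J l₀ = 0 := by
      have h1 : (n:ℝ)*(l₀ - l₀) = (J l₀ : ℝ) := hJspec l₀ (Finset.mem_filter.2 ⟨hl₀, hrefl l₀⟩)
      have : (J l₀ : ℝ) = ((0:ℤ):ℝ) := by rw [← h1]; simp
      exact_mod_cast this
    -- pairwise difference divisibility
    have hdiff : ∀ x ∈ Λ.filter (fun x => Rel x l₀), ∀ y ∈ Λ.filter (fun x => Rel x l₀), x ≠ y →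
        M ∣ (J x - J y) ∧ ¬ (d:ℤ) ∣ ((J x - J y) / M) := by
      intro x hx y hy hxy
      rw [Finset.mem_filter] at hx hy
      have hrelxy : Rel x y := htrans x l₀ y hx.2 (hsymm y l₀ hy.2)
      have hj : (n:ℝ)*(x - y) = ((J x - J y : ℤ):ℝ) := by
        push_cast
        have h1 := hJspec x (Finset.mem_filter.2 hx)
        have h2 := hJspec y (Finset.mem_filter.2 hy)
        linarith [h1, h2]
      obtain ⟨k, hk⟩ := hD1 x hx.1 y hy.1 hxy hrelxy
      have hnj : ¬ (n:ℤ) ∣ (J x - J y) := by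
        rintro ⟨m0, hm0⟩
        obtain ⟨hni, -⟩ := hQ x hx.1 y hy.1 hxy
        apply hni
        refine ⟨m0, ?_⟩
        have h5 : (n:ℝ) * (x - y) = (n:ℝ) * (m0:ℝ) := by
          rw [hj, hm0]; push_cast; ring
        exact mul_left_cancel₀ hn0R h5
      have hmain := D1_int q p n a hq0R ha hj hk
      have := int_core n q p (J x - J y) k hq hn hcop hmain hnj
      rw [← hd, ← hn', ← hM] at this
      exact this
    refine ⟨J, hJspec, hJl₀, ?_, ?_⟩
    · intro x hx
      by_cases hxl : x = l₀
      · rw [hxl, hJl₀]; exact dvd_zero M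
      · have := (hdiff x hx l₀ (Finset.mem_filter.2 ⟨hl₀, hrefl l₀⟩) hxl).1
        rw [hJl₀, sub_zero] at this
        exact this
    · intro x hx y hy hxy
      have h1 := (hdiff x hx y hy hxy).2
      have h2 : M ∣ J x := by
        by_cases hxl : x = l₀
        · rw [hxl, hJl₀]; exact dvd_zero M
        · have := (hdiff x hx l₀ (Finset.mem_filter.2 ⟨hl₀, hrefl l₀⟩) hxl).1
          rw [hJl₀, sub_zero] at this
          exact this
      have h3 : M ∣ J y := by
        by_cases hyl : y = l₀
        · rw [hyl, hJl₀]; exact dvd_zero M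
        · have := (hdiff y hy l₀ (Finset.mem_filter.2 ⟨hl₀, hrefl l₀⟩) hyl).1
          rw [hJl₀, sub_zero] at this
          exact this
      obtain ⟨ex, hex⟩ := h2
      obtain ⟨ey, hey⟩ := h3
      rw [hex, hey, Int.mul_ediv_cancel_left _ hM0, Int.mul_ediv_cancel_left _ hM0]
      rw [hex, hey, ← mul_sub, Int.mul_ediv_cancel_left _ hM0] at h1
      exact h1
  haveI : NeZero d := ⟨hd0.ne'⟩
  -- class card bound
  have hbound : ∀ l₀ ∈ Λ, (Λ.filter (fun x => Rel x l₀)).card ≤ d := by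
    intro l₀ hl₀
    obtain ⟨J, hJspec, hJl₀, hJdvd, hJinj⟩ := hclass l₀ hl₀
    have hinj : Set.InjOn (fun x => ((J x / M : ℤ) : ZMod d)) (Λ.filter (fun x => Rel x l₀)) := by
      intro x hx y hy hfeq
      by_contra hxy
      apply hJinj x (by exact_mod_cast hx) y (by exact_mod_cast hy) hxy
      have := (ZMod.intCast_eq_intCast_iff' _ _ _).1 hfeq
      exact Int.ModEq.dvd (by exact this.symm)
    calc (Λ.filter (fun x => Rel x l₀)).card
        ≤ (Finset.univ : Finset (ZMod d)).card :=
          Finset.card_le_card_of_injOn _ (fun _ _ => Finset.mem_univ _) hinj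
      _ = d := by rw [Finset.card_univ, ZMod.card]
  -- assembly
  obtain ⟨l₀, hl₀⟩ := Finset.card_pos.1 (by omega : 0 < Λ.card)
  by_cases hall : ∀ x ∈ Λ, Rel x l₀
  · have hfilt : Λ.filter (fun x => Rel x l₀) = Λ := Finset.filter_true_of_mem hall
    have h1 : n ≤ d := by
      rw [← hcard, ← hfilt]
      exact hbound l₀ hl₀
    exact le_antisymm (Nat.le_of_dvd hn0 hdn) h1
  push_neg at hall
  obtain ⟨μ₀, hμ₀, hnrel⟩ := hall
  set C1 := Λ.filter (fun x => Rel x l₀) with hC1def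
  set C2 := Λ.filter (fun x => Rel x μ₀) with hC2def
  have hl₀μ₀ : ¬ Rel l₀ μ₀ := fun h => hnrel (hsymm _ _ h)
  have hsub : Λ ⊆ C1 ∪ C2 := by
    intro x hx
    by_cases hrx : Rel x l₀
    · exact Finset.mem_union_left _ (Finset.mem_filter.2 ⟨hx, hrx⟩)
    · exact Finset.mem_union_right _ (Finset.mem_filter.2 ⟨hx, hB x hx l₀ hl₀ μ₀ hμ₀ hrx hl₀μ₀⟩)
  have hcards : n ≤ C1.card + C2.card := by
    rw [← hcard]
    exact le_trans (Finset.card_le_card hsub) (Finset.card_union_le _ _)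
  have hb1 := hbound l₀ hl₀
  have hb2 := hbound μ₀ hμ₀
  rw [← hC1def] at hb1
  rw [← hC2def] at hb2
  have hdle : d ≤ n := Nat.le_of_dvd hn0 hdn
  obtain ⟨m, hm⟩ := hdn
  by_cases hdn' : d = n
  · exact hdn'
  exfalso
  have hdlt : d < n := lt_of_le_of_ne hdle hdn'
  have hA2 : n ≤ 2*d := by omega
  have hm2 : m = 2 := by
    rcases Nat.lt_or_ge m 3 with h | h
    · interval_cases m <;> omega
    · have h3 : d*3 ≤ d*m := Nat.mul_le_mul_left d h
      omega
  have hn2d : n = 2*d := by rw [hm, hm2]; ring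
  have hC1card : C1.card = d := by omega
  have hd2 : 2 ≤ d := by omega
  haveI : Fact (1 < d) := ⟨hd2⟩
  -- rigidity
  obtain ⟨J, hJspec, hJl₀, hJdvd, hJinj⟩ := hclass l₀ hl₀
  rw [← hC1def] at hJspec hJdvd hJinj
  set f : ℝ → ZMod d := fun x => ((J x / M : ℤ) : ZMod d) with hfdef
  have hinjf : Set.InjOn f C1 := by
    intro x hx y hy hfeq
    by_contra hxy
    apply hJinj x (by exact_mod_cast hx) y (by exact_mod_cast hy) hxy
    have h7 := (ZMod.intCast_eq_intCast_iff' _ _ _).1 hfeq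
    exact Int.ModEq.dvd (by exact h7.symm)
  have himg : Finset.image f C1 = Finset.univ := by
    apply Finset.eq_univ_of_card
    rw [Finset.card_image_of_injOn hinjf, hC1card]
    exact (ZMod.card d).symm
  have hl₀C1 : l₀ ∈ C1 := Finset.mem_filter.2 ⟨hl₀, hrefl l₀⟩
  have hmem : f l₀ + 1 ∈ Finset.image f C1 := by rw [himg]; exact Finset.mem_univ _
  obtain ⟨lam, hlamC1, hflam⟩ := Finset.mem_image.1 hmem
  have hlamΛ : lam ∈ Λ := (Finset.mem_filter.1 hlamC1).1
  have hfl₀ : f l₀ = 0 := by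
    rw [hfdef]
    simp only [hJl₀]
    norm_num
  rw [hfl₀, zero_add] at hflam
  obtain ⟨e, he⟩ := hJdvd lam hlamC1
  have hediv : J lam / M = e := by rw [he]; exact Int.mul_ediv_cancel_left _ hM0
  have hde1 : (d:ℤ) ∣ e - 1 := by
    have h8 : ((e : ℤ) : ZMod d) = ((1 : ℤ) : ZMod d) := by
      rw [← hediv]
      rw [hfdef] at hflam
      simpa using hflam
    have h9 := (ZMod.intCast_eq_intCast_iff' _ _ _).1 h8
    exact Int.ModEq.dvd (by exact h9.symm)
  -- cross equations
  have hnotrel : ∀ x ∈ C1, ¬ Rel x μ₀ := by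
    intro x hx h
    have hx2 := (Finset.mem_filter.1 hx).2
    exact hl₀μ₀ (htrans l₀ x μ₀ (hsymm x l₀ hx2) h)
  obtain ⟨j1, k1, hj1, he1⟩ := hD2 lam hlamΛ μ₀ hμ₀ (hnotrel lam hlamC1)
  obtain ⟨j2, k2, hj2, he2⟩ := hD2 l₀ hl₀ μ₀ hμ₀ (hnotrel l₀ hl₀C1)
  have hkey1 : (n:ℤ) * (j1 - j2) = ((n:ℤ) - 2) * (J lam) := by
    have hreal : (n:ℝ)*((j1:ℝ) - (j2:ℝ)) = ((n:ℝ) - 2) * ((J lam : ℤ):ℝ) := by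
      rw [← hj1, ← hj2, ← hJspec lam hlamC1]
      ring
    exact_mod_cast hreal
  have hkey2 : p * (j1 - j2) = (k1 - k2) * q * ((n:ℤ)-2) := by
    have h2g : 2*(p*(j1 - j2)) = 2*((k1 - k2) * q * ((n:ℤ)-2)) := by
      linear_combination he1 - he2
    exact mul_left_cancel₀ two_ne_zero h2g
  have hnZ : (n:ℤ) = (d:ℤ)*(n':ℤ) := by exact_mod_cast hnn'
  have hkey1' : (n:ℤ) * (j1 - j2) = ((n:ℤ) - 2) * (M * e) := by rw [hkey1, he]
  have hkey3 : ((n:ℤ)-2) * (p * (M*e)) = ((n:ℤ)-2) * ((k1-k2) * q * n) := by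
    linear_combination (n:ℤ)*hkey2 - p*hkey1' + p*hkey1'*0
  have hkey4 : p * (M * e) = (k1-k2) * q * n := mul_left_cancel₀ hn2Z hkey3
  have hkey5 : (q:ℤ)*(n':ℤ) * (p * e) = (q:ℤ)*(n':ℤ) * ((k1-k2) * d) := by
    rw [hM] at hkey4
    linear_combination hkey4 + (k1-k2)*(q:ℤ)*hnZ
  have hM0' : (q:ℤ)*(n':ℤ) ≠ 0 := by rw [hM] at hM0; exact hM0
  have hkey6 : p * e = (k1 - k2) * d := mul_left_cancel₀ hM0' hkey5
  have hdp : (d:ℤ) ∣ p := by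
    have h1 : (d:ℤ) ∣ p * e := ⟨k1 - k2, by linarith [hkey6]⟩
    have h2 : (d:ℤ) ∣ p * (e - 1) := Dvd.dvd.mul_left hde1 p
    have h3 : p = p*e - p*(e-1) := by ring
    rw [h3]
    exact dvd_sub h1 h2
  have hdpq : (d:ℤ) ∣ p + q := Int.dvd_natAbs.1 (Int.natCast_dvd_natCast.2 (Nat.gcd_dvd_right _ _))
  have hdq : (d:ℤ) ∣ (q:ℤ) := by
    have := dvd_sub hdpq hdp
    simpa using this
  have hdq' : d ∣ q := Int.natCast_dvd_natCast.1 hdq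
  have hdp' : d ∣ p.natAbs := by
    have := Int.natAbs_dvd_natAbs.2 hdp
    simpa using this
  have hfinal : d ∣ 1 := hcop ▸ Nat.dvd_gcd hdp' hdq'
  have := Nat.le_of_dvd one_pos hfinal
  omega

end SpectralAux

namespace SpectralAux


lemma orth_char (n : ℕ) (hn : 3 ≤ n) (a : ℝ)
    (ha : ∀ k ∈ Finset.range (n-1), a ≠ (k:ℝ)) (t : ℝ) :
    (∑ x ∈ insert a ((Finset.range (n-1)).image ((↑) : ℕ → ℝ)),
        Complex.exp (2 * π * Complex.I * ((t:ℝ):ℂ) * x) = 0) ↔ Qcond n a t := by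
  obtain ⟨u, rfl⟩ : ∃ u, n = u + 2 := ⟨n - 2, by omega⟩
  have hu : 1 ≤ u := by omega
  have hnotmem : a ∉ (Finset.range (u+2-1)).image ((↑) : ℕ → ℝ) := by
    simp only [Finset.mem_image, not_exists, not_and]
    intro k hk
    exact Ne.symm (ha k hk)
  rw [Finset.sum_insert hnotmem,
    Finset.sum_image (fun x _ y _ h => Nat.cast_injective h)]
  have hrange : u + 2 - 1 = u + 1 := by omega
  rw [hrange]
  constructor
  · intro h
    apply (key_lemma u hu a t).1
    rw [show Complex.exp (2 * π * Complex.I * t * a)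
        = Complex.exp (2 * π * Complex.I * ((t:ℝ):ℂ) * (a:ℂ)) by norm_cast]
    rw [Finset.sum_congr rfl (fun k _ => by
      show Complex.exp (2 * π * Complex.I * t * k) = Complex.exp (2 * π * Complex.I * ((t:ℝ):ℂ) * ((k:ℝ):ℂ))
      norm_cast)]
    exact h
  · intro h
    have h2 := (key_lemma u hu a t).2 h
    rw [show Complex.exp (2 * π * Complex.I * t * a)
        = Complex.exp (2 * π * Complex.I * ((t:ℝ):ℂ) * (a:ℂ)) by norm_cast] at h2
    rw [Finset.sum_congr rfl (fun k _ => by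
      show Complex.exp (2 * π * Complex.I * t * k) = Complex.exp (2 * π * Complex.I * ((t:ℝ):ℂ) * ((k:ℝ):ℂ))
      norm_cast)] at h2
    exact h2

end SpectralAux


end Aux

/-- Let `n ≥ 3` and let `a ∈ ℝ` with `a ∉ {0, 1, …, n-2}`.  The set
`A = {0, 1, …, n-2, a}` is spectral if and only if `a` is rational and, writing `a = p/q` in
reduced form, `p + q ≡ 0 (mod n)`. -/
theorem isSpectral_insert_range_iff (n : ℕ) (hn : 3 ≤ n) (a : ℝ)
    (ha : ∀ k ∈ Finset.range (n - 1), a ≠ (k : ℝ)) :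
    IsSpectralFinset (insert a ((Finset.range (n - 1)).image ((↑) : ℕ → ℝ))) ↔
      ∃ (p : ℤ) (q : ℕ), 1 ≤ q ∧ Nat.Coprime p.natAbs q ∧ a = (p : ℝ) / (q : ℝ) ∧
        (n : ℤ) ∣ p + (q : ℤ) := by
  have hA_notmem : a ∉ (Finset.range (n - 1)).image ((↑) : ℕ → ℝ) := by
    simp only [Finset.mem_image, not_exists, not_and]
    intro k hk
    exact Ne.symm (ha k hk)
  have hAne : (insert a ((Finset.range (n - 1)).image ((↑) : ℕ → ℝ))).Nonempty :=
    ⟨a, Finset.mem_insert_self _ _⟩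
  have hAcard : (insert a ((Finset.range (n - 1)).image ((↑) : ℕ → ℝ))).card = n := by
    rw [Finset.card_insert_of_notMem hA_notmem,
      Finset.card_image_of_injective _ Nat.cast_injective, Finset.card_range]
    omega
  rw [SpectralAux.isSpectral_iff_orth _ hAne, hAcard]
  constructor
  · rintro ⟨Λ, hc, horth⟩
    exact SpectralAux.main_nt_fwd n hn a Λ hc (fun l hl m hm hlm =>
      (SpectralAux.orth_char n hn a ha (l - m)).1 (horth l hl m hm hlm))
  · rintro ⟨p, q, hq, hcop, haeq, hdvd⟩
    obtain ⟨Λ, hc, hQ⟩ := SpectralAux.main_nt_rev n q p hn hq hcop a haeq hdvd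
    exact ⟨Λ, hc, fun l hl m hm hlm =>
      (SpectralAux.orth_char n hn a ha (l - m)).2 (hQ l hl m hm hlm)⟩
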